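/- Let Φ and Ψ be frames for H, and let m be a sequence of nonzero scalars such that mΦ = (m_n φ_n) is also a frame for H. Assume M = M_{m,Φ,Ψ} is invertible. Then Ψ† := (M^{-1}(m_n φ_n)) is a dual frame of Ψ, and it is the unique sequence in H satisfying M^{-1} = M_{1/m, Ψ†, Φ^{ad}} for every a-pseudo-dual Φ^{ad} of Φ. -/

import Mathlib

open scoped ComplexConjugate ComplexInnerProductSpace

variable {H : Type*} [NormedAddCommGroup H] [InnerProductSpace ℂ H] [CompleteSpace H]

/-- `Φ` is a Bessel sequence in `H`. -/
def IsBessel (Φ : ℕ → H) : Prop :=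
  ∃ B : ℝ, 0 < B ∧ ∀ f : H, Summable (fun n => ‖⟪Φ n, f⟫‖ ^ 2) ∧
    ∑' n, ‖⟪Φ n, f⟫‖ ^ 2 ≤ B * ‖f‖ ^ 2

/-- `Φ` is a frame for `H`. -/
def IsFrame (Φ : ℕ → H) : Prop :=
  ∃ A B : ℝ, 0 < A ∧ 0 < B ∧ ∀ f : H, Summable (fun n => ‖⟪Φ n, f⟫‖ ^ 2) ∧
    A * ‖f‖ ^ 2 ≤ ∑' n, ‖⟪Φ n, f⟫‖ ^ 2 ∧ ∑' n, ‖⟪Φ n, f⟫‖ ^ 2 ≤ B * ‖f‖ ^ 2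

/-- `F` is a dual frame of the frame `Φ`:
`f = Σ ⟨f, Φ n⟩ F n = Σ ⟨f, F n⟩ Φ n` for all `f` (paper convention `⟨f, x⟩ = ⟪x, f⟫`). -/
def IsDualFrame (Φ F : ℕ → H) : Prop :=
  IsFrame F ∧ ∀ f : H, HasSum (fun n => ⟪Φ n, f⟫ • F n) f ∧ HasSum (fun n => ⟪F n, f⟫ • Φ n) f

/-- `F` is an analysis pseudo-dual of `Φ`: `f = Σ ⟨f, F n⟩ Φ n` for all `f`. -/
def IsAPseudoDual (Φ F : ℕ → H) : Prop := ∀ f : H, HasSum (fun n => ⟪F n, f⟫ • Φ n) f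

/-- `F` is a synthesis pseudo-dual of `Φ`: `f = Σ ⟨f, Φ n⟩ F n` for all `f`. -/
def IsSPseudoDual (Φ F : ℕ → H) : Prop := ∀ f : H, HasSum (fun n => ⟪Φ n, f⟫ • F n) f

/-- The frame operator `S_Φ f = Σ ⟨f, Φ n⟩ Φ n`. -/
noncomputable def frameOp (Φ : ℕ → H) (f : H) : H := ∑' n, ⟪Φ n, f⟫ • Φ n

/-- `m` is semi-normalized: `0 < a ≤ ‖m n‖ ≤ b < ∞`. -/
def SemiNormalized (m : ℕ → ℂ) : Prop := ∃ a b : ℝ, 0 < a ∧ ∀ n, a ≤ ‖m n‖ ∧ ‖m n‖ ≤ b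


set_option linter.unusedSectionVars false in
lemma finset_synth_bound (Ψ : ℕ → H) (B : ℝ) (hB0 : 0 ≤ B)
    (hB : ∀ f : H, Summable (fun n => ‖⟪Ψ n, f⟫‖ ^ 2) ∧ ∑' n, ‖⟪Ψ n, f⟫‖ ^ 2 ≤ B * ‖f‖ ^ 2)
    (c : ℕ → ℂ) (t : Finset ℕ) :
    ‖∑ n ∈ t, c n • Ψ n‖ ^ 2 ≤ B * ∑ n ∈ t, ‖c n‖ ^ 2 := by
  set v := ∑ n ∈ t, c n • Ψ n with hv
  set X := ∑ n ∈ t, ‖c n‖ ^ 2 with hX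
  set Y := ∑ n ∈ t, ‖⟪Ψ n, v⟫‖ ^ 2 with hY
  have hX0 : 0 ≤ X := Finset.sum_nonneg fun n _ => sq_nonneg _
  have hY0 : 0 ≤ Y := Finset.sum_nonneg fun n _ => sq_nonneg _
  have hYB : Y ≤ B * ‖v‖ ^ 2 :=
    le_trans (Summable.sum_le_tsum t (fun n _ => sq_nonneg _) (hB v).1) (hB v).2
  have h1 : ‖v‖ ^ 2 ≤ ∑ n ∈ t, ‖c n‖ * ‖⟪Ψ n, v⟫‖ := by
    have e1 : ‖v‖ ^ 2 = Complex.re ⟪v, v⟫ := (inner_self_eq_norm_sq (𝕜 := ℂ) v).symm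
    have e2 : (⟪v, v⟫ : ℂ) = ∑ n ∈ t, (starRingEnd ℂ) (c n) * ⟪Ψ n, v⟫ := by
      rw [hv, sum_inner]
      exact Finset.sum_congr rfl fun n _ => inner_smul_left _ _ _
    rw [e1, e2, Complex.re_sum]
    refine Finset.sum_le_sum fun n _ => ?_
    calc (Complex.re ((starRingEnd ℂ) (c n) * ⟪Ψ n, v⟫))
        ≤ ‖(starRingEnd ℂ) (c n) * ⟪Ψ n, v⟫‖ := Complex.re_le_norm _
      _ = ‖c n‖ * ‖⟪Ψ n, v⟫‖ := by rw [norm_mul, RCLike.norm_conj]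
  have h2 : (∑ n ∈ t, ‖c n‖ * ‖⟪Ψ n, v⟫‖) ^ 2 ≤ X * Y := by
    simpa [hX, hY] using Finset.sum_mul_sq_le_sq_mul_sq t (fun n => ‖c n‖) (fun n => ‖⟪Ψ n, v⟫‖)
  have h3 : ‖v‖ ^ 2 * ‖v‖ ^ 2 ≤ X * (B * ‖v‖ ^ 2) := by
    have hs0 : 0 ≤ ∑ n ∈ t, ‖c n‖ * ‖⟪Ψ n, v⟫‖ :=
      Finset.sum_nonneg fun n _ => mul_nonneg (norm_nonneg _) (norm_nonneg _)
    nlinarith [sq_nonneg (‖v‖ ^ 2)]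
  rcases eq_or_lt_of_le (sq_nonneg ‖v‖) with h | h
  · nlinarith
  · have := le_of_mul_le_mul_right (by nlinarith : ‖v‖ ^ 2 * ‖v‖ ^ 2 ≤ (B * X) * ‖v‖ ^ 2) h
    linarith

lemma bessel_synth (Ψ : ℕ → H) (B : ℝ) (hB0 : 0 ≤ B)
    (hB : ∀ f : H, Summable (fun n => ‖⟪Ψ n, f⟫‖ ^ 2) ∧ ∑' n, ‖⟪Ψ n, f⟫‖ ^ 2 ≤ B * ‖f‖ ^ 2)
    (c : ℕ → ℂ) (hc : Summable fun n => ‖c n‖ ^ 2) :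
    Summable (fun n => c n • Ψ n) := by
  rw [summable_iff_vanishing_norm]
  intro ε hε
  obtain ⟨s, hs⟩ := summable_iff_vanishing_norm.1 hc (ε ^ 2 / (B + 1)) (by positivity)
  refine ⟨s, fun t ht => ?_⟩
  have h2 := hs t ht
  have hX0 : (0:ℝ) ≤ ∑ n ∈ t, ‖c n‖ ^ 2 := Finset.sum_nonneg fun n _ => sq_nonneg _
  have hX : ∑ n ∈ t, ‖c n‖ ^ 2 < ε ^ 2 / (B + 1) := by
    rwa [Real.norm_eq_abs, abs_of_nonneg hX0] at h2
  have hX' : (∑ n ∈ t, ‖c n‖ ^ 2) * (B + 1) < ε ^ 2 := (lt_div_iff₀ (by positivity)).1 hX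
  have h1 := finset_synth_bound Ψ B hB0 hB c t
  nlinarith [norm_nonneg (∑ n ∈ t, c n • Ψ n)]

theorem stmt8 (Φ Ψ : ℕ → H) (m : ℕ → ℂ) (hΦ : IsFrame Φ) (hΨ : IsFrame Ψ)
    (hm : ∀ n, m n ≠ 0) (hmΦ : IsFrame (fun n => m n • Φ n)) (M N : H →L[ℂ] H)
    (hM : ∀ f : H, HasSum (fun n => (m n * ⟪Ψ n, f⟫) • Φ n) (M f))
    (hNM : ∀ f : H, N (M f) = f) (hMN : ∀ f : H, M (N f) = f) :
    IsDualFrame Ψ (fun n => N (m n • Φ n)) ∧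
    ∀ G : ℕ → H,
      (∀ Φad : ℕ → H, IsAPseudoDual Φ Φad → ∀ f : H,
        HasSum (fun n => ((m n)⁻¹ * ⟪Φad n, f⟫) • G n) (N f))
      ↔ G = fun n => N (m n • Φ n) := by
  classical
  obtain ⟨A₁, B₁, hA₁, hB₁, hmΦb⟩ := hmΦ
  obtain ⟨A₂, B₂, hA₂, hB₂, hΨb⟩ := hΨ
  set N' := ContinuousLinearMap.adjoint N with hN'def
  have hinner : ∀ (n : ℕ) (f : H), ⟪N (m n • Φ n), f⟫ = ⟪m n • Φ n, N' f⟫ := fun n f =>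
    (ContinuousLinearMap.adjoint_inner_right N _ _).symm
  -- the synthesis direction: HasSum ⟪Ψ† n, f⟫ • Ψ n = f
  have hsyn : ∀ f : H, HasSum (fun n => ⟪N (m n • Φ n), f⟫ • Ψ n) f := by
    intro f
    have hc : Summable (fun n => ‖⟪N (m n • Φ n), f⟫‖ ^ 2) := by
      simp only [hinner]
      exact (hmΦb (N' f)).1
    obtain ⟨v, hv⟩ :=
      bessel_synth Ψ B₂ hB₂.le (fun g => ⟨(hΨb g).1, (hΨb g).2.2⟩) _ hc
    have hvf : v = f := by
      refine ext_inner_left ℂ fun g => ?_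
      have h1 : HasSum (fun n => ⟪N (m n • Φ n), f⟫ * ⟪g, Ψ n⟫) ⟪g, v⟫ := by
        have := hv.mapL (innerSL ℂ g)
        simpa [inner_smul_right] using this
      have h2 : HasSum (fun n => ⟪N (m n • Φ n), f⟫ * ⟪g, Ψ n⟫) ⟪g, f⟫ := by
        have h3 := ((hM g).mapL (innerSL ℂ (N' f))).star
        have h5 : star (⟪N' f, M g⟫ : ℂ) = ⟪g, f⟫ := by
          rw [RCLike.star_def, inner_conj_symm, ContinuousLinearMap.adjoint_inner_right, hNM]
        have h6 : (fun n => star ((innerSL ℂ (N' f)) ((m n * ⟪Ψ n, g⟫) • Φ n))) =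
            fun n => ⟪N (m n • Φ n), f⟫ * ⟪g, Ψ n⟫ := by
          funext n
          simp only [innerSL_apply_apply, inner_smul_right, hinner, inner_smul_left, star_mul',
            RCLike.star_def, inner_conj_symm, map_mul]
          ring
        rw [h6] at h3
        simpa only [innerSL_apply_apply, h5] using h3
      exact h1.unique h2
    exact hvf ▸ hv
  -- the analysis direction : HasSum ⟪Ψ n, f⟫ • Ψ† n = f
  have hana : ∀ f : H, HasSum (fun n => ⟪Ψ n, f⟫ • N (m n • Φ n)) f := by
    intro f
    have h1 := (hM f).mapL N
    rw [hNM] at h1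
    have h2 : (fun n => N ((m n * ⟪Ψ n, f⟫) • Φ n)) =
        fun n => ⟪Ψ n, f⟫ • N (m n • Φ n) := by
      funext n
      simp only [map_smul, smul_smul]
      ring_nf
    rwa [h2] at h1
  -- the frame property of Ψ†
  have hframe : IsFrame (fun n => N (m n • Φ n)) := by
    refine ⟨A₁ / (‖M‖ + 1) ^ 2, B₁ * (‖N'‖ + 1) ^ 2, by positivity, by positivity, fun f => ?_⟩
    have hsumm : Summable (fun n => ‖⟪N (m n • Φ n), f⟫‖ ^ 2) := by
      simp only [hinner]; exact (hmΦb (N' f)).1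
    have htsum : ∑' n, ‖⟪N (m n • Φ n), f⟫‖ ^ 2 = ∑' n, ‖⟪m n • Φ n, N' f⟫‖ ^ 2 := by
      simp only [hinner]
    obtain ⟨_, hlow, hup⟩ := hmΦb (N' f)
    refine ⟨hsumm, ?_, ?_⟩
    · -- lower bound
      rw [htsum]
      refine le_trans ?_ hlow
      have hMf : ‖f‖ ^ 2 ≤ ‖M‖ * ‖f‖ * ‖N' f‖ := by
        have e1 : (⟪f, f⟫ : ℂ) = ⟪M f, N' f⟫ := by
          rw [hN'def, ContinuousLinearMap.adjoint_inner_right, hNM]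
        calc ‖f‖ ^ 2 = Complex.re ⟪f, f⟫ := (inner_self_eq_norm_sq (𝕜 := ℂ) f).symm
          _ ≤ ‖(⟪M f, N' f⟫ : ℂ)‖ := by rw [e1]; exact Complex.re_le_norm _
          _ ≤ ‖M f‖ * ‖N' f‖ := norm_inner_le_norm _ _
          _ ≤ ‖M‖ * ‖f‖ * ‖N' f‖ :=
            mul_le_mul_of_nonneg_right (M.le_opNorm f) (norm_nonneg _)
      have key : ‖f‖ ^ 2 ≤ (‖M‖ + 1) ^ 2 * ‖N' f‖ ^ 2 := by
        rcases eq_or_lt_of_le (norm_nonneg f) with h0 | h0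
        · rw [← h0]; norm_num; positivity
        · have h4 : ‖f‖ ≤ (‖M‖ + 1) * ‖N' f‖ := by
            have h4a : ‖f‖ * ‖f‖ ≤ ((‖M‖ + 1) * ‖N' f‖) * ‖f‖ := by
              nlinarith [hMf, mul_nonneg (norm_nonneg (N' f)) (norm_nonneg f)]
            exact (mul_le_mul_iff_of_pos_right h0).1 h4a
          nlinarith [norm_nonneg f, norm_nonneg (N' f), norm_nonneg M]
      rw [div_mul_eq_mul_div, div_le_iff₀ (by positivity)]
      calc A₁ * ‖f‖ ^ 2 ≤ A₁ * ((‖M‖ + 1) ^ 2 * ‖N' f‖ ^ 2) :=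
            mul_le_mul_of_nonneg_left key hA₁.le
        _ = A₁ * ‖N' f‖ ^ 2 * (‖M‖ + 1) ^ 2 := by ring
    · -- upper bound
      rw [htsum]
      refine le_trans hup ?_
      have h4 : ‖N' f‖ ≤ (‖N'‖ + 1) * ‖f‖ := by
        have := N'.le_opNorm f
        nlinarith [norm_nonneg f]
      have h5 : ‖N' f‖ ^ 2 ≤ (‖N'‖ + 1) ^ 2 * ‖f‖ ^ 2 := by
        nlinarith [norm_nonneg (N' f), norm_nonneg f, norm_nonneg N']
      calc B₁ * ‖N' f‖ ^ 2 ≤ B₁ * ((‖N'‖ + 1) ^ 2 * ‖f‖ ^ 2) :=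
            mul_le_mul_of_nonneg_left h5 hB₁.le
        _ = B₁ * (‖N'‖ + 1) ^ 2 * ‖f‖ ^ 2 := by ring
  refine ⟨⟨hframe, fun f => ⟨hana f, hsyn f⟩⟩, ?_⟩
  -- Part 2
  intro G
  constructor
  · intro hG
    -- a canonical a-pseudo-dual of Φ
    set F : ℕ → H := fun n => N' ((starRingEnd ℂ) (m n) • Ψ n) with hFdef
    have hFinner : ∀ (n : ℕ) (f : H), ⟪F n, f⟫ = m n * ⟪Ψ n, N f⟫ := by
      intro n f
      rw [hFdef]
      simp only [hN'def, ContinuousLinearMap.adjoint_inner_left, inner_smul_left,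
        RingHom.id_apply, RingHomCompTriple.comp_apply, starRingEnd_self_apply]
    have hF : IsAPseudoDual Φ F := by
      intro f
      have h1 := hM (N f)
      rw [hMN] at h1
      have h2 : (fun n => (m n * ⟪Ψ n, N f⟫) • Φ n) = fun n => ⟪F n, f⟫ • Φ n := by
        funext n; rw [hFinner]
      rwa [h2] at h1
    funext k
    by_cases hH : ∃ f₀ : H, f₀ ≠ 0
    · obtain ⟨f₀, hf₀⟩ := hH
      have ha : (⟪f₀, f₀⟫ : ℂ) ≠ 0 := by
        simp only [ne_eq, inner_self_eq_zero]
        exact hf₀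
      -- perturbed a-pseudo-dual
      set F' : ℕ → H := fun n => F n + ((if n = k then (1:ℂ) else 0) - ⟪Φ k, F n⟫) • f₀
        with hF'def
      have hF'inner : ∀ (n : ℕ) (f : H),
          ⟪F' n, f⟫ = ⟪F n, f⟫ + ((if n = k then (1:ℂ) else 0) - ⟪F n, Φ k⟫) * ⟪f₀, f⟫ := by
        intro n f
        rw [hF'def]
        simp only [inner_add_left, inner_smul_left, map_sub, inner_conj_symm]
        congr 2
        split <;> simp
      have hF' : IsAPseudoDual Φ F' := by
        intro f
        have h1 := hF f
        have h2 : HasSum (fun n => ((if n = k then (1:ℂ) else 0) * ⟪f₀, f⟫) • Φ n)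
            (⟪f₀, f⟫ • Φ k) := by
          refine (hasSum_ite_eq k (⟪f₀, f⟫ • Φ k)).congr_fun fun n => ?_
          by_cases hn : n = k
          · subst hn; simp
          · simp [hn]
        have h3 : HasSum (fun n => (⟪F n, Φ k⟫ * ⟪f₀, f⟫) • Φ n) (⟪f₀, f⟫ • Φ k) := by
          refine ((hF (Φ k)).const_smul (⟪f₀, f⟫ : ℂ)).congr_fun fun n => ?_
          rw [smul_smul]
          congr 1
          ring
        have h4 := (h1.add h2).sub h3
        have h5 : HasSum (fun n => ⟪F' n, f⟫ • Φ n)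
            (f + ⟪f₀, f⟫ • Φ k - ⟪f₀, f⟫ • Φ k) := by
          refine h4.congr_fun fun n => ?_
          rw [hF'inner]
          rw [← add_smul, ← sub_smul]
          congr 1
          ring
        simpa using h5
      -- apply the hypothesis with the two pseudo-duals
      have e1 := hG F' hF' f₀
      have e2 := hG F hF f₀
      have e3 := (hG F hF (Φ k)).const_smul (⟪f₀, f₀⟫ : ℂ)
      have e := (e1.sub e2).add e3
      have efin : HasSum (fun n => if n = k then ((⟪f₀, f₀⟫ : ℂ) * (m k)⁻¹) • G k else 0)
          (N f₀ - N f₀ + (⟪f₀, f₀⟫ : ℂ) • N (Φ k)) := by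
        refine e.congr_fun fun n => ?_
        rw [hF'inner]
        by_cases hn : n = k
        · simp only [hn, eq_self_iff_true, if_true]
          rw [smul_smul, ← sub_smul, ← add_smul]
          congr 1
          ring
        · simp only [if_neg hn]
          rw [smul_smul, ← sub_smul, ← add_smul, ← zero_smul ℂ (G n)]
          congr 1
          ring
      have huniq : ((⟪f₀, f₀⟫ : ℂ) * (m k)⁻¹) • G k = (⟪f₀, f₀⟫ : ℂ) • N (Φ k) := by
        have := (hasSum_ite_eq k (((⟪f₀, f₀⟫ : ℂ) * (m k)⁻¹) • G k)).unique efin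
        simpa using this
      have hGk : G k = m k • N (Φ k) := by
        have h7 := congrArg (fun x => ((m k * (⟪f₀, f₀⟫ : ℂ)⁻¹)) • x) huniq
        simp only [smul_smul] at h7
        rw [show (m k * (⟪f₀, f₀⟫ : ℂ)⁻¹) * ((⟪f₀, f₀⟫ : ℂ) * (m k)⁻¹) = 1 by
            field_simp [hm k, ha],
          show (m k * (⟪f₀, f₀⟫ : ℂ)⁻¹) * (⟪f₀, f₀⟫ : ℂ) = m k by field_simp [ha],
          one_smul] at h7
        exact h7
      show G k = N (m k • Φ k)
      rw [map_smul, hGk]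
    · push_neg at hH
      rw [hH (G k), hH (N (m k • Φ k))]
  · rintro rfl
    intro Φad hΦad f
    have h1 := (hΦad f).mapL N
    have h2 : (fun n => N (⟪Φad n, f⟫ • Φ n)) =
        fun n => ((m n)⁻¹ * ⟪Φad n, f⟫) • N (m n • Φ n) := by
      funext n
      simp only [map_smul, smul_smul]
      congr 1
      rw [mul_assoc, mul_comm (⟪Φad n, f⟫) (m n), ← mul_assoc, inv_mul_cancel₀ (hm n), one_mul]
    rwa [h2] at h1
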